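/- For every c ∈ ℝ and r > 0, tr(R_cᵀ R_{c,r}) = 2 Σ_{ℓ=0}^{n−1} sinc(θ_ℓ r). -/
import Mathlib


noncomputable section

open MeasureTheory
open scoped RealInnerProductSpace

/-- `sinc x = sin x / x` for `x ≠ 0`, and `sinc 0 = 1`. -/
def sinc (x : ℝ) : ℝ := if x = 0 then 1 else Real.sin x / x

/-- The 2×2 rotation matrix. -/
def Rot (x : ℝ) : Matrix (Fin 2) (Fin 2) ℝ :=
  !![Real.cos x, -Real.sin x; Real.sin x, Real.cos x]

/-- The RoPE matrix `R_t`: block diagonal with ℓ-th block `Rot (θ ℓ * t)`. -/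
def RoPE {n : ℕ} (θ : Fin n → ℝ) (t : ℝ) :
    Matrix (Fin 2 × Fin n) (Fin 2 × Fin n) ℝ :=
  Matrix.blockDiagonal fun ℓ => Rot (θ ℓ * t)

/-- The interval (RoTE) matrix `R_{c,r}`: block diagonal with ℓ-th block
`sinc (θ ℓ * r) • Rot (θ ℓ * c)`. -/
def RoTE {n : ℕ} (θ : Fin n → ℝ) (c r : ℝ) :
    Matrix (Fin 2 × Fin n) (Fin 2 × Fin n) ℝ :=
  Matrix.blockDiagonal fun ℓ => sinc (θ ℓ * r) • Rot (θ ℓ * c)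

/-- The normalization constant `C_r = (1/n) ∑ ℓ, sinc (θ ℓ * r)`. -/
def Cnorm {n : ℕ} (θ : Fin n → ℝ) (r : ℝ) : ℝ :=
  (1 / (n : ℝ)) * ∑ ℓ : Fin n, sinc (θ ℓ * r)

/-- Action of a `2n × 2n` matrix on Euclidean space `ℝ^{2n}`. -/
def mApply {n : ℕ} (M : Matrix (Fin 2 × Fin n) (Fin 2 × Fin n) ℝ)
    (v : EuclideanSpace ℝ (Fin 2 × Fin n)) : EuclideanSpace ℝ (Fin 2 × Fin n) :=
  Matrix.toEuclideanLin M v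

/-- Operator norm on `ℝ^{2n×2n}` induced by the Euclidean norm on `ℝ^{2n}`. -/
def opNorm {n : ℕ} (M : Matrix (Fin 2 × Fin n) (Fin 2 × Fin n) ℝ) : ℝ :=
  ‖Matrix.toEuclideanCLM (𝕜 := ℝ) M‖

/-- `tr(R_cᵀ R_{c,r}) = 2 ∑_ℓ sinc (θ_ℓ r)`. -/
theorem trace_rope_rote (n : ℕ) (hn : 1 ≤ n) (θ : Fin n → ℝ)
    (c r : ℝ) (hr : 0 < r) :
    Matrix.trace ((RoPE θ c).transpose * RoTE θ c r) = 2 * ∑ ℓ : Fin n, sinc (θ ℓ * r) := by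
  rw [RoPE, RoTE, Matrix.blockDiagonal_transpose, ← Matrix.blockDiagonal_mul,
    Matrix.trace_blockDiagonal, Finset.mul_sum]
  congr 1; ext ℓ
  rw [Matrix.mul_smul, Matrix.trace_smul]
  have : (Rot (θ ℓ * c)).transpose * Rot (θ ℓ * c) = 1 := by
    have ht : (Rot (θ ℓ * c)).transpose =
        !![Real.cos (θ ℓ * c), Real.sin (θ ℓ * c);
           -Real.sin (θ ℓ * c), Real.cos (θ ℓ * c)] := by
      rw [Rot, ← Matrix.transposeᵣ_eq]; rfl
    rw [ht, Rot, Matrix.mul_fin_two]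
    have h := Real.sin_sq_add_cos_sq (θ ℓ * c)
    have h2 := Real.cos_sq_add_sin_sq (θ ℓ * c)
    rw [show (1 : Matrix (Fin 2) (Fin 2) ℝ) = !![1,0;0,1] by
      rw [← Matrix.etaExpand_eq (1 : Matrix (Fin 2) (Fin 2) ℝ)]; rfl]
    ext i j; fin_cases i <;> fin_cases j <;> simp <;> nlinarith [h]
  rw [this]
  simp [Matrix.trace, Matrix.diag, Fin.sum_univ_two]
  ring
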